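/- There is no probability measure τ on [0,∞) such that the function M_τ(z) = ∫ zt/(1−zt) dτ(t) satisfies, for all z in some neighborhood of 0 in ℂ∖[0,∞), M_τ(z) = (z − 1 + √((1−z)² + 4λz))/(2λ), where λ ∈ (0,1] is fixed and the square root denotes the principal branch. -/

import Mathlib

open MeasureTheory Complex Filter

set_option maxHeartbeats 1000000 in
theorem stmt_4 (lam : ℝ) (hlam : lam ∈ Set.Ioc (0:ℝ) 1) :
    ¬ ∃ (τ : Measure ℝ), IsProbabilityMeasure τ ∧ τ (Set.Iio 0) = 0 ∧
      ∃ ε > (0:ℝ), ∀ z : ℂ, z ∈ Metric.ball (0:ℂ) ε → ¬ (z.im = 0 ∧ 0 ≤ z.re) →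
        (∫ t : ℝ, (z * t) / (1 - z * t) ∂τ)
          = (z - 1 + ((1 - z)^2 + 4 * (lam:ℂ) * z) ^ ((1:ℂ)/2)) / (2 * lam) := by
  obtain ⟨hlam0, hlam1⟩ := hlam
  rintro ⟨τ, hprob, hsupp, ε, hε, heq⟩
  haveI := hprob
  set s : ℝ → ℝ := fun x => Real.sqrt ((1+x)^2 - 4*lam*x) with hs_def
  have hq : ∀ x : ℝ, 0 ≤ x → 0 ≤ (1+x)^2 - 4*lam*x := by
    intro x hx; nlinarith [sq_nonneg (1-x)]
  have hs_sq : ∀ x : ℝ, 0 ≤ x → s x ^ 2 = (1+x)^2 - 4*lam*x := fun x hx => Real.sq_sqrt (hq x hx)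
  have hs_nonneg : ∀ x : ℝ, 0 ≤ s x := fun x => Real.sqrt_nonneg _
  have hs_lb : ∀ x : ℝ, 0 ≤ x → 1 - x ≤ s x := by
    intro x hx
    have h1 : (1-x)^2 ≤ (1+x)^2 - 4*lam*x := by nlinarith
    calc 1 - x ≤ |1-x| := le_abs_self _
    _ = Real.sqrt ((1-x)^2) := (Real.sqrt_sq_eq_abs _).symm
    _ ≤ s x := Real.sqrt_le_sqrt h1
  have hD2 : ∀ x : ℝ, 0 ≤ x → 2 ≤ 1 + x + s x := fun x hx => by have := hs_lb x hx; linarith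
  have hD0 : ∀ x : ℝ, 0 ≤ x → (0:ℝ) < 1 + x + s x := fun x hx => lt_of_lt_of_le two_pos (hD2 x hx)
  have hae : ∀ᵐ t ∂τ, 0 ≤ t := by
    rw [ae_iff]
    have : {a : ℝ | ¬ 0 ≤ a} = Set.Iio 0 := by ext t; simp [not_le]
    rw [this]; exact hsupp
  -- the real-variable equation
  have key0 : ∀ x : ℝ, 0 < x → x < ε →
      ∫ t, x*t/(1+x*t) ∂τ = (x+1-s x)/(2*lam) := by
    intro x hx0 hxε
    have hz := heq (-(x:ℂ)) ?_ ?_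
    · have hint : ∀ t : ℝ, (-(x:ℂ) * t)/(1 - -(x:ℂ)*t) = (((-(x*t))/(1+x*t) : ℝ) : ℂ) := by
        intro t; push_cast; ring_nf
      simp_rw [hint] at hz
      have hz2 := (integral_ofReal (μ := τ) (f := fun t => -(x*t)/(1+x*t)) (𝕜 := ℂ)).symm.trans hz
      have hrw : ((1 : ℂ) - -(x:ℂ))^2 + 4*(lam:ℂ)*(-(x:ℂ)) = (((1+x)^2 - 4*lam*x : ℝ) : ℂ) := by
        push_cast; ring
      rw [hrw] at hz2
      have hpow : ((((1+x)^2 - 4*lam*x : ℝ)) : ℂ) ^ ((1:ℂ)/2) = ((s x : ℝ) : ℂ) := by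
        rw [hs_def]
        simp only []
        rw [Real.sqrt_eq_rpow, Complex.ofReal_cpow (hq x hx0.le)]
        norm_num
      rw [hpow] at hz2
      have h4 : ((-(x:ℂ) - 1 + (s x : ℂ)) / (2 * (lam:ℂ))) = (((-x - 1 + s x)/(2*lam) : ℝ) : ℂ) := by
        push_cast; ring
      have hz'' : ∫ t, (-(x*t))/(1+x*t) ∂τ = (-x - 1 + s x)/(2*lam) :=
        Complex.ofReal_injective (hz2.trans h4)
      have hneg : ∫ t, (-(x*t))/(1+x*t) ∂τ = - ∫ t, x*t/(1+x*t) ∂τ := by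
        simp_rw [neg_div]; exact integral_neg _
      rw [hneg] at hz''
      have : ∫ t, x*t/(1+x*t) ∂τ = -((-x - 1 + s x)/(2*lam)) := by linarith
      rw [this]; ring
    · simp only [Metric.mem_ball, dist_zero_right, norm_neg, Complex.norm_real,
        Real.norm_eq_abs]
      rwa [_root_.abs_of_pos hx0]
    · rintro ⟨-, hre⟩
      simp only [Complex.neg_re, Complex.ofReal_re] at hre
      linarith
  -- integrability of t/(1+x t)
  have hmeas : ∀ x : ℝ, Measurable (fun t : ℝ => t/(1+x*t)) :=
    fun x => measurable_id.div (measurable_const.add (measurable_id.const_mul x))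
  have hint_div : ∀ x : ℝ, 0 < x → Integrable (fun t : ℝ => t/(1+x*t)) τ := by
    intro x hx0
    refine (integrable_const (1/x)).mono' (hmeas x).aestronglyMeasurable ?_
    filter_upwards [hae] with t ht
    have h1 : (0:ℝ) < 1 + x*t := by nlinarith
    rw [Real.norm_eq_abs, _root_.abs_of_nonneg (div_nonneg ht h1.le), div_le_div_iff₀ h1 hx0]
    nlinarith
  have hnn_div : ∀ x : ℝ, 0 < x → 0 ≤ᵐ[τ] (fun t : ℝ => t/(1+x*t)) := by
    intro x hx0
    filter_upwards [hae] with t ht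
    have h1 : (0:ℝ) < 1 + x*t := by nlinarith
    exact div_nonneg ht h1.le
  -- key1 : value of ∫ t/(1+xt)
  have key1 : ∀ x : ℝ, 0 < x → x < ε → ∫ t, t/(1+x*t) ∂τ = 2/(1+x+s x) := by
    intro x hx0 hxε
    have h0 := key0 x hx0 hxε
    simp_rw [mul_div_assoc] at h0
    rw [integral_const_mul] at h0
    have hcross : (x+1-s x)*(1+x+s x) = 4*lam*x := by
      have := hs_sq x hx0.le; nlinarith
    have h2 : x * (2/(1+x+s x)) = (x+1-s x)/(2*lam) := by
      rw [eq_div_iff (by positivity : (2:ℝ)*lam ≠ 0)]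
      have hD := (hD0 x hx0.le).ne'
      field_simp
      nlinarith [hcross]
    exact mul_left_cancel₀ hx0.ne' (h0.trans h2.symm)
  -- the sequence
  set xs : ℕ → ℝ := fun n => ε/2 * (1/2)^n with hxs_def
  have hxs_pos : ∀ n, 0 < xs n := fun n => by positivity
  have hxs_lt : ∀ n, xs n < ε := by
    intro n
    have h1 : (1/2:ℝ)^n ≤ 1 := pow_le_one₀ (by norm_num) (by norm_num)
    calc xs n ≤ ε/2 * 1 := by
          apply mul_le_mul_of_nonneg_left h1 (by positivity)
    _ < ε := by linarith
  have hxs_anti : Antitone xs := by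
    apply Antitone.const_mul ?_ (by positivity : (0:ℝ) ≤ ε/2)
    intro a b hab
    exact pow_le_pow_of_le_one (by norm_num) (by norm_num) hab
  have hxs_tendsto : Tendsto xs atTop (nhds 0) := by
    have := (tendsto_pow_atTop_nhds_zero_of_lt_one (by norm_num : (0:ℝ) ≤ 1/2) (by norm_num)).const_mul (ε/2)
    simpa [hxs_def] using this
  -- tendsto of s ∘ xs
  have hs_cont : Continuous s := Real.continuous_sqrt.comp (by continuity)
  have hs_xs : Tendsto (fun n => s (xs n)) atTop (nhds 1) := by
    have h0 : s 0 = 1 := by simp [hs_def]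
    have := (hs_cont.tendsto 0).comp hxs_tendsto
    rwa [h0] at this
  have hD_xs : Tendsto (fun n => 1 + xs n + s (xs n)) atTop (nhds 2) := by
    have h := ((tendsto_const_nhds (x := (1:ℝ))).add hxs_tendsto).add hs_xs
    have h2 : (1:ℝ) + 0 + 1 = 2 := by norm_num
    rw [h2] at h
    exact h
  -- Step A: ∫⁻ ofReal t = 1
  have hlin : ∀ x : ℝ, 0 < x → x < ε →
      ∫⁻ t, ENNReal.ofReal (t/(1+x*t)) ∂τ = ENNReal.ofReal (2/(1+x+s x)) := by
    intro x hx0 hxε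
    rw [← ofReal_integral_eq_lintegral_ofReal (hint_div x hx0) (hnn_div x hx0), key1 x hx0 hxε]
  have stepA : ∫⁻ t, ENNReal.ofReal t ∂τ = 1 := by
    have hsup_ae : ∀ᵐ t ∂τ, (⨆ n, ENNReal.ofReal (t/(1+xs n*t))) = ENNReal.ofReal t := by
      filter_upwards [hae] with t ht
      apply le_antisymm
      · apply iSup_le
        intro n
        apply ENNReal.ofReal_le_ofReal
        exact div_le_self ht (by nlinarith [hxs_pos n, (hxs_pos n).le])
      · have htend : Tendsto (fun n => ENNReal.ofReal (t/(1+xs n*t))) atTop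
            (nhds (ENNReal.ofReal t)) := by
          apply ENNReal.tendsto_ofReal
          have : Tendsto (fun n => t/(1+xs n*t)) atTop (nhds (t/(1+0*t))) := by
            apply Tendsto.div tendsto_const_nhds
            · exact (tendsto_const_nhds.add (hxs_tendsto.mul tendsto_const_nhds))
            · norm_num
          simpa using this
        exact le_of_tendsto htend (Eventually.of_forall fun n => le_iSup (fun k => ENNReal.ofReal (t/(1+xs k*t))) n)
    have hmono_ae : ∀ᵐ t ∂τ, Monotone fun n => ENNReal.ofReal (t/(1+xs n*t)) := by
      filter_upwards [hae] with t ht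
      intro n m hnm
      apply ENNReal.ofReal_le_ofReal
      have h2 : (0:ℝ) < 1 + xs m * t := by nlinarith [hxs_pos m]
      apply div_le_div_of_nonneg_left ht h2
      have := hxs_anti hnm
      nlinarith
    have hmeas' : ∀ n, AEMeasurable (fun t => ENNReal.ofReal (t/(1+xs n*t))) τ :=
      fun n => ((hmeas (xs n)).ennreal_ofReal).aemeasurable
    have hMCT := lintegral_iSup' hmeas' hmono_ae
    have hL : ∫⁻ t, ENNReal.ofReal t ∂τ = ⨆ n, ENNReal.ofReal (2/(1+xs n+s (xs n))) := by
      rw [← lintegral_congr_ae hsup_ae, hMCT]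
      congr 1
      ext n
      exact hlin (xs n) (hxs_pos n) (hxs_lt n)
    rw [hL]
    apply le_antisymm
    · apply iSup_le
      intro n
      rw [← ENNReal.ofReal_one]
      apply ENNReal.ofReal_le_ofReal
      rw [div_le_one (hD0 (xs n) (hxs_pos n).le)]
      exact hD2 (xs n) (hxs_pos n).le
    · have htend : Tendsto (fun n => ENNReal.ofReal (2/(1+xs n+s (xs n)))) atTop (nhds 1) := by
        rw [← ENNReal.ofReal_one]
        apply ENNReal.tendsto_ofReal
        have := Tendsto.div (tendsto_const_nhds (x := (2:ℝ))) hD_xs (by norm_num)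
        convert this using 2 <;> norm_num
      exact le_of_tendsto htend (Eventually.of_forall fun n => le_iSup (fun k => ENNReal.ofReal (2/(1+xs k+s (xs k)))) n)
  -- integrability of t and its integral
  have hint_t : Integrable (fun t : ℝ => t) τ := by
    refine ⟨measurable_id.aestronglyMeasurable, ?_⟩
    rw [hasFiniteIntegral_iff_norm]
    have : ∫⁻ t, ENNReal.ofReal ‖t‖ ∂τ = ∫⁻ t, ENNReal.ofReal t ∂τ := by
      apply lintegral_congr_ae
      filter_upwards [hae] with t ht
      rw [Real.norm_eq_abs, _root_.abs_of_nonneg ht]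
    rw [this, stepA]
    exact ENNReal.one_lt_top
  have hmean : ∫ t, t ∂τ = 1 := by
    rw [integral_eq_lintegral_of_nonneg_ae hae measurable_id.aestronglyMeasurable, stepA]
    simp
  -- Step B prep: ∫ t²/(1+xt)
  have key3 : ∀ x : ℝ, 0 < x → x < ε →
      ∫ t, t^2/(1+x*t) ∂τ = (1 + (x+2-4*lam)/(s x+1))/(1+x+s x) := by
    intro x hx0 hxε
    have hpt : (fun t : ℝ => t^2/(1+x*t)) =ᵐ[τ] (fun t => (t - t/(1+x*t))/x) := by
      filter_upwards [hae] with t ht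
      have h1 : (0:ℝ) < 1 + x*t := by nlinarith
      field_simp
      ring
    rw [integral_congr_ae hpt]
    have : (fun t : ℝ => (t - t/(1+x*t))/x) = fun t => (t - t/(1+x*t))/x := rfl
    rw [integral_div]
    rw [integral_sub hint_t (hint_div x hx0), hmean, key1 x hx0 hxε]
    -- algebra: (1 - 2/D)/x = (1 + (x+2-4λ)/(s+1))/D
    have hs1 : (0:ℝ) < s x + 1 := by linarith [hs_nonneg x]
    have hD : (0:ℝ) < 1 + x + s x := hD0 x hx0.le
    have hsq := hs_sq x hx0.le
    rw [div_eq_div_iff (ne_of_gt hx0) (ne_of_gt hD)]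
    field_simp
    linear_combination hsq
  -- Step B: ∫⁻ ofReal t² = ofReal (1-λ)
  have hmeas2 : ∀ x : ℝ, Measurable (fun t : ℝ => t^2/(1+x*t)) :=
    fun x => (measurable_id.pow_const 2).div (measurable_const.add (measurable_id.const_mul x))
  have hnn2 : ∀ x : ℝ, 0 < x → 0 ≤ᵐ[τ] (fun t : ℝ => t^2/(1+x*t)) := by
    intro x hx0
    filter_upwards [hae] with t ht
    have h1 : (0:ℝ) < 1 + x*t := by nlinarith
    positivity
  have hint2 : ∀ x : ℝ, 0 < x → Integrable (fun t : ℝ => t^2/(1+x*t)) τ := by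
    intro x hx0
    have hpt : (fun t : ℝ => (t - t/(1+x*t))/x) =ᵐ[τ] (fun t : ℝ => t^2/(1+x*t)) := by
      filter_upwards [hae] with t ht
      have h1 : (0:ℝ) < 1 + x*t := by nlinarith
      field_simp
      ring
    exact (((hint_t.sub (hint_div x hx0)).div_const x)).congr hpt
  have stepB : ∫⁻ t, ENNReal.ofReal (t^2) ∂τ = ENNReal.ofReal (1-lam) := by
    have hsup_ae : ∀ᵐ t ∂τ, (⨆ n, ENNReal.ofReal (t^2/(1+xs n*t))) = ENNReal.ofReal (t^2) := by
      filter_upwards [hae] with t ht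
      apply le_antisymm
      · apply iSup_le
        intro n
        apply ENNReal.ofReal_le_ofReal
        exact div_le_self (sq_nonneg t) (by nlinarith [hxs_pos n])
      · have htend : Tendsto (fun n => ENNReal.ofReal (t^2/(1+xs n*t))) atTop
            (nhds (ENNReal.ofReal (t^2))) := by
          apply ENNReal.tendsto_ofReal
          have : Tendsto (fun n => t^2/(1+xs n*t)) atTop (nhds (t^2/(1+0*t))) := by
            apply Tendsto.div tendsto_const_nhds
            · exact (tendsto_const_nhds.add (hxs_tendsto.mul tendsto_const_nhds))
            · norm_num
          simpa using this
        exact le_of_tendsto htend (Eventually.of_forall fun n => le_iSup (fun k => ENNReal.ofReal (t^2/(1+xs k*t))) n)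
    have hmono_ae : ∀ᵐ t ∂τ, Monotone fun n => ENNReal.ofReal (t^2/(1+xs n*t)) := by
      filter_upwards [hae] with t ht
      intro n m hnm
      apply ENNReal.ofReal_le_ofReal
      have h2 : (0:ℝ) < 1 + xs m * t := by nlinarith [hxs_pos m]
      apply div_le_div_of_nonneg_left (sq_nonneg t) h2
      have := hxs_anti hnm
      nlinarith
    have hmeas' : ∀ n, AEMeasurable (fun t => ENNReal.ofReal (t^2/(1+xs n*t))) τ :=
      fun n => ((hmeas2 (xs n)).ennreal_ofReal).aemeasurable
    have hMCT := lintegral_iSup' hmeas' hmono_ae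
    have hL : ∫⁻ t, ENNReal.ofReal (t^2) ∂τ
        = ⨆ n, ENNReal.ofReal ((1 + (xs n+2-4*lam)/(s (xs n)+1))/(1+xs n+s (xs n))) := by
      rw [← lintegral_congr_ae hsup_ae, hMCT]
      congr 1
      ext n
      rw [← ofReal_integral_eq_lintegral_ofReal (hint2 (xs n) (hxs_pos n)) (hnn2 (xs n) (hxs_pos n)),
        key3 (xs n) (hxs_pos n) (hxs_lt n)]
    -- monotone sequence with limit 1-λ
    have hmono_seq : Monotone (fun n => ∫⁻ t, ENNReal.ofReal (t^2/(1+xs n*t)) ∂τ) := by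
      intro n m hnm
      apply lintegral_mono_ae
      filter_upwards [hmono_ae] with t ht
      exact ht hnm
    have htend : Tendsto (fun n => ENNReal.ofReal ((1 + (xs n+2-4*lam)/(s (xs n)+1))/(1+xs n+s (xs n))))
        atTop (nhds (ENNReal.ofReal (1-lam))) := by
      apply ENNReal.tendsto_ofReal
      have hnum : Tendsto (fun n => 1 + (xs n+2-4*lam)/(s (xs n)+1)) atTop (nhds (1 + (0+2-4*lam)/(1+1))) := by
        apply Tendsto.add tendsto_const_nhds
        apply Tendsto.div
        · exact (hxs_tendsto.add tendsto_const_nhds).sub tendsto_const_nhds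
        · exact hs_xs.add tendsto_const_nhds
        · norm_num
      have := Tendsto.div hnum hD_xs (by norm_num)
      have heq2 : (1 + (0+2-4*lam)/(1+1))/2 = 1 - lam := by ring
      rwa [heq2] at this
    -- iSup of this sequence: rewrite through hmono_seq
    have hseq_eq : (fun n => ∫⁻ t, ENNReal.ofReal (t^2/(1+xs n*t)) ∂τ)
        = fun n => ENNReal.ofReal ((1 + (xs n+2-4*lam)/(s (xs n)+1))/(1+xs n+s (xs n))) := by
      ext n
      rw [← ofReal_integral_eq_lintegral_ofReal (hint2 (xs n) (hxs_pos n)) (hnn2 (xs n) (hxs_pos n)),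
        key3 (xs n) (hxs_pos n) (hxs_lt n)]
    rw [hL]
    rw [← hseq_eq] at htend ⊢
    exact tendsto_nhds_unique (tendsto_atTop_iSup hmono_seq) htend
  -- final contradiction : 1 ≤ 1 - λ/2
  have hfinal : (1:ENNReal) ≤ ENNReal.ofReal (1 - lam/2) := by
    calc (1:ENNReal) = ∫⁻ t, ENNReal.ofReal t ∂τ := stepA.symm
    _ ≤ ∫⁻ t, ENNReal.ofReal ((1+t^2)/2) ∂τ := by
        apply lintegral_mono
        intro t
        apply ENNReal.ofReal_le_ofReal
        nlinarith [sq_nonneg (1-t)]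
    _ = ∫⁻ t, ENNReal.ofReal (1/2) * (ENNReal.ofReal 1 + ENNReal.ofReal (t^2)) ∂τ := by
        apply lintegral_congr
        intro t
        rw [← ENNReal.ofReal_add (by norm_num) (sq_nonneg t), ← ENNReal.ofReal_mul (by norm_num)]
        congr 1
        ring
    _ = ENNReal.ofReal (1/2) * (∫⁻ t, (ENNReal.ofReal 1 + ENNReal.ofReal (t^2)) ∂τ) := by
        rw [lintegral_const_mul (f := fun t : ℝ => ENNReal.ofReal 1 + ENNReal.ofReal (t^2)) _ (measurable_const.add ((measurable_id'.pow_const 2).ennreal_ofReal))]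
    _ = ENNReal.ofReal (1/2) * (1 + ENNReal.ofReal (1-lam)) := by
        rw [lintegral_add_left measurable_const, stepB]
        simp
    _ = ENNReal.ofReal (1/2) * ENNReal.ofReal (1 + (1-lam)) := by
        rw [ENNReal.ofReal_add (by norm_num) (by linarith)]
        norm_num
    _ = ENNReal.ofReal (1/2 * (1 + (1-lam))) := (ENNReal.ofReal_mul (by norm_num)).symm
    _ = ENNReal.ofReal (1 - lam/2) := by congr 1; ring
  rw [← ENNReal.ofReal_one, ENNReal.ofReal_le_ofReal_iff (by linarith)] at hfinal
  linarith
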